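/- For every n ∈ ℕ, the group (under composition) of orientation-preserving affine automorphisms of ℤ^n_lex is isomorphic to UT(n+1,ℤ). -/

import Mathlib

/-- `Fin n → R` with the lexicographic order in which the **last** coordinate is the most
significant: `x < y` iff `x ≠ y` and `x i < y i` at the largest index `i` where `x` and `y`
differ. -/
def LexPow (R : Type*) (n : ℕ) : Type _ := Fin n → R

namespace LexPow

variable {R : Type*} {n : ℕ}

/-- The identity bijection between `Fin n → R` and `LexPow R n`. -/
def of : (Fin n → R) ≃ LexPow R n := Equiv.refl _

instance : CoeFun (LexPow R n) (fun _ => Fin n → R) := ⟨fun x => x⟩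

instance [AddCommGroup R] : AddCommGroup (LexPow R n) :=
  inferInstanceAs (AddCommGroup (Fin n → R))

/-- The map reversing coordinates, into the Mathlib lexicographic order (in which the *first*
coordinate is most significant). -/
def toRevLex (x : LexPow R n) : Lex (Fin n → R) :=
  toLex (fun i : Fin n => of.symm x (Fin.rev i))

theorem toRevLex_injective : Function.Injective (toRevLex (R := R) (n := n)) := by
  intro a b hab
  refine of.symm.injective (funext fun i => ?_)
  have h := congrFun (congrArg ofLex hab) (Fin.rev i)
  simpa [toRevLex, Fin.rev_rev] using h

noncomputable instance [AddCommGroup R] [LinearOrder R] [IsOrderedAddMonoid R] :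
    LinearOrder (LexPow R n) :=
  LinearOrder.lift' (toRevLex (R := R) (n := n)) toRevLex_injective

instance [AddCommGroup R] [LinearOrder R] [IsOrderedAddMonoid R] :
    IsOrderedAddMonoid (LexPow R n) where
  add_le_add_left := fun a b hab c => by
    show toRevLex (a + c) ≤ toRevLex (b + c)
    have h : toRevLex a ≤ toRevLex b := hab
    exact add_le_add_left h (toRevLex c)

end LexPow

/-- An orientation-preserving affine automorphism of a linearly ordered abelian group `Λ`:
an order-preserving bijection `g` of `Λ` admitting an order-preserving group automorphism
`dilation` (the dilation factor) with `g x - g y = dilation (x - y)` for all `x, y`. -/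
structure OPAffineAut (Λ : Type*) [AddCommGroup Λ] [LinearOrder Λ] [IsOrderedAddMonoid Λ] extends Λ ≃ Λ where
  strictMono' : StrictMono toEquiv
  dilation : Λ ≃+ Λ
  dilation_strictMono : StrictMono dilation
  affine : ∀ x y : Λ, toEquiv x - toEquiv y = dilation (x - y)

namespace OPAffineAut

variable {Λ : Type*} [AddCommGroup Λ] [LinearOrder Λ] [IsOrderedAddMonoid Λ]

instance : CoeFun (OPAffineAut Λ) (fun _ => Λ → Λ) := ⟨fun f => f.toEquiv⟩

theorem ext' {f g : OPAffineAut Λ} (h : ∀ x, f x = g x) : f = g := by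
  have he : f.toEquiv = g.toEquiv := Equiv.ext h
  have hd : f.dilation = g.dilation := AddEquiv.ext fun x => by
    have hf := f.affine x 0
    have hg := g.affine x 0
    rw [sub_zero] at hf hg
    rw [← hf, ← hg]
    show f x - f 0 = g x - g 0
    rw [h x, h 0]
  cases f; cases g
  cases he; cases hd
  rfl

instance : Group (OPAffineAut Λ) where
  one :=
    { toEquiv := Equiv.refl Λ
      strictMono' := strictMono_id
      dilation := AddEquiv.refl Λ
      dilation_strictMono := strictMono_id
      affine := fun _ _ => rfl }
  mul f g :=
    { toEquiv := g.toEquiv.trans f.toEquiv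
      strictMono' := f.strictMono'.comp g.strictMono'
      dilation := g.dilation.trans f.dilation
      dilation_strictMono := f.dilation_strictMono.comp g.dilation_strictMono
      affine := fun x y => by
        simp only [Equiv.trans_apply, AddEquiv.trans_apply]
        rw [f.affine, g.affine] }
  inv f :=
    { toEquiv := f.toEquiv.symm
      strictMono' := fun a b hab => f.strictMono'.lt_iff_lt.1 (by
        simpa only [Equiv.apply_symm_apply] using hab)
      dilation := f.dilation.symm
      dilation_strictMono := fun a b hab => f.dilation_strictMono.lt_iff_lt.1 (by
        simpa only [AddEquiv.apply_symm_apply] using hab)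
      affine := fun x y => f.dilation.injective (by
        rw [AddEquiv.apply_symm_apply, ← f.affine, Equiv.apply_symm_apply,
          Equiv.apply_symm_apply]) }
  mul_assoc f g h := ext' fun _ => rfl
  one_mul f := ext' fun _ => rfl
  mul_one f := ext' fun _ => rfl
  inv_mul_cancel f := ext' fun x => f.toEquiv.symm_apply_apply x

@[simp] theorem mul_apply (f g : OPAffineAut Λ) (x : Λ) : (f * g) x = f (g x) := rfl
@[simp] theorem one_apply (x : Λ) : (1 : OPAffineAut Λ) x = x := rfl
@[simp] theorem inv_apply (f : OPAffineAut Λ) (x : Λ) : f⁻¹ x = f.toEquiv.symm x := rfl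

/-- An affine automorphism is *hyperbolic* if it has no fixed point. -/
def Hyperbolic (f : OPAffineAut Λ) : Prop := ∀ x : Λ, f x ≠ x

/-- An affine automorphism is *rigid* if for `ε = ±1`, whenever `f^ε` moves some point up,
it moves every point up. -/
def Rigid (f : OPAffineAut Λ) : Prop :=
  ∀ ε : ℤ, ε = 1 ∨ ε = -1 → (∃ x : Λ, x < (f ^ ε) x) → ∀ y : Λ, y < (f ^ ε) y

end OPAffineAut

/-- An orientation-preserving affine action (a homomorphism into the group of
orientation-preserving affine automorphisms) is *free* if every nontrivial group element
acts without fixed points. -/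
def AffineActionFree {G Λ : Type*} [Group G] [AddCommGroup Λ] [LinearOrder Λ] [IsOrderedAddMonoid Λ]
    (ρ : G →* OPAffineAut Λ) : Prop :=
  ∀ g : G, g ≠ 1 → ∀ x : Λ, ρ g x ≠ x

/-- An orientation-preserving affine action is *essentially free* if every nontrivial group
element acts as a rigid hyperbolic affine automorphism. -/
def AffineActionEssentiallyFree {G Λ : Type*} [Group G] [AddCommGroup Λ] [LinearOrder Λ] [IsOrderedAddMonoid Λ]
    (ρ : G →* OPAffineAut Λ) : Prop :=
  ∀ g : G, g ≠ 1 → (ρ g).Rigid ∧ (ρ g).Hyperbolic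

/-- `G` admits an essentially free orientation-preserving affine action on `Λ`. -/
def HasEssentiallyFreeAffineAction (G : Type*) [Group G] (Λ : Type*)
    [AddCommGroup Λ] [LinearOrder Λ] [IsOrderedAddMonoid Λ] : Prop :=
  ∃ ρ : G →* OPAffineAut Λ, AffineActionEssentiallyFree ρ

section Matrices

variable {R : Type*} {n : ℕ}

theorem diag_mul_of_triangular [CommRing R] {A B : Matrix (Fin n) (Fin n) R}
    (hA : A.BlockTriangular id) (hB : B.BlockTriangular id) (i : Fin n) :
    (A * B) i i = A i i * B i i := by
  rw [Matrix.mul_apply]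
  apply Finset.sum_eq_single i
  · intro k _ hk
    rcases lt_or_gt_of_ne hk with h | h
    · rw [hA (show (id : Fin n → Fin n) k < id i from h), zero_mul]
    · rw [hB (show (id : Fin n → Fin n) i < id k from h), mul_zero]
  · intro h; exact absurd (Finset.mem_univ i) h

/-- The group `UT(n,R)` of upper triangular `n × n` matrices over `R` with all diagonal
entries equal to `1`, realised as a subgroup of the group of units of the matrix ring. -/
def UT (n : ℕ) (R : Type*) [CommRing R] : Subgroup (Matrix (Fin n) (Fin n) R)ˣ where
  carrier := {A | (∀ i j : Fin n, j < i → (A : Matrix (Fin n) (Fin n) R) i j = 0) ∧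
    ∀ i : Fin n, (A : Matrix (Fin n) (Fin n) R) i i = 1}
  one_mem' := by
    refine ⟨fun i j hij => ?_, fun i => ?_⟩
    · simp [Matrix.one_apply, (ne_of_lt hij).symm]
    · simp
  mul_mem' := by
    rintro A B ⟨hA1, hA2⟩ ⟨hB1, hB2⟩
    have hA : (A : Matrix (Fin n) (Fin n) R).BlockTriangular id := fun i j h => hA1 i j h
    have hB : (B : Matrix (Fin n) (Fin n) R).BlockTriangular id := fun i j h => hB1 i j h
    refine ⟨fun i j hij => ?_, fun i => ?_⟩
    · exact (hA.mul hB) (show (id : Fin n → Fin n) j < id i from hij)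
    · rw [Units.val_mul, diag_mul_of_triangular hA hB, hA2, hB2, one_mul]
  inv_mem' := by
    rintro A ⟨hA1, hA2⟩
    have hA : (A : Matrix (Fin n) (Fin n) R).BlockTriangular id := fun i j h => hA1 i j h
    haveI := A.invertible
    have hAinv : ((A : Matrix (Fin n) (Fin n) R)⁻¹).BlockTriangular id :=
      Matrix.blockTriangular_inv_of_blockTriangular hA
    have hcoe : ((A⁻¹ : (Matrix (Fin n) (Fin n) R)ˣ) : Matrix (Fin n) (Fin n) R)
        = (A : Matrix (Fin n) (Fin n) R)⁻¹ := Matrix.coe_units_inv A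
    refine ⟨fun i j hij => ?_, fun i => ?_⟩
    · rw [hcoe]; exact hAinv (show (id : Fin n → Fin n) j < id i from hij)
    · have h1 : ((A : Matrix (Fin n) (Fin n) R) * (A : Matrix (Fin n) (Fin n) R)⁻¹) i i = 1 := by
        rw [Matrix.mul_inv_of_invertible]; simp
      rw [diag_mul_of_triangular hA hAinv, hA2, one_mul] at h1
      rw [hcoe, h1]

/-- The group `T*(n,R)` of upper triangular `n × n` matrices over a linearly ordered field `R`
with positive diagonal entries, realised as a subgroup of the units of the matrix ring. -/
def Tstar (n : ℕ) (R : Type*) [Field R] [LinearOrder R] [IsStrictOrderedRing R] : Subgroup (Matrix (Fin n) (Fin n) R)ˣ where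
  carrier := {A | (∀ i j : Fin n, j < i → (A : Matrix (Fin n) (Fin n) R) i j = 0) ∧
    ∀ i : Fin n, 0 < (A : Matrix (Fin n) (Fin n) R) i i}
  one_mem' := by
    refine ⟨fun i j hij => ?_, fun i => ?_⟩
    · simp [Matrix.one_apply, (ne_of_lt hij).symm]
    · simp
  mul_mem' := by
    rintro A B ⟨hA1, hA2⟩ ⟨hB1, hB2⟩
    have hA : (A : Matrix (Fin n) (Fin n) R).BlockTriangular id := fun i j h => hA1 i j h
    have hB : (B : Matrix (Fin n) (Fin n) R).BlockTriangular id := fun i j h => hB1 i j h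
    refine ⟨fun i j hij => ?_, fun i => ?_⟩
    · exact (hA.mul hB) (show (id : Fin n → Fin n) j < id i from hij)
    · rw [Units.val_mul, diag_mul_of_triangular hA hB]
      exact mul_pos (hA2 i) (hB2 i)
  inv_mem' := by
    rintro A ⟨hA1, hA2⟩
    have hA : (A : Matrix (Fin n) (Fin n) R).BlockTriangular id := fun i j h => hA1 i j h
    haveI := A.invertible
    have hAinv : ((A : Matrix (Fin n) (Fin n) R)⁻¹).BlockTriangular id :=
      Matrix.blockTriangular_inv_of_blockTriangular hA
    have hcoe : ((A⁻¹ : (Matrix (Fin n) (Fin n) R)ˣ) : Matrix (Fin n) (Fin n) R)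
        = (A : Matrix (Fin n) (Fin n) R)⁻¹ := Matrix.coe_units_inv A
    refine ⟨fun i j hij => ?_, fun i => ?_⟩
    · rw [hcoe]; exact hAinv (show (id : Fin n → Fin n) j < id i from hij)
    · have h1 : ((A : Matrix (Fin n) (Fin n) R) * (A : Matrix (Fin n) (Fin n) R)⁻¹) i i = 1 := by
        rw [Matrix.mul_inv_of_invertible]; simp
      rw [diag_mul_of_triangular hA hAinv] at h1
      rw [hcoe]
      rcases lt_trichotomy ((A : Matrix (Fin n) (Fin n) R)⁻¹ i i) 0 with h | h | h
      · exact absurd h1 (by nlinarith [hA2 i])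
      · rw [h, mul_zero] at h1; exact absurd h1 zero_ne_one
      · exact h

/-- The last index of `Fin N` (any element of `Fin N` witnesses `0 < N`). -/
def lastOf {N : ℕ} (r : Fin N) : Fin N := ⟨N - 1, Nat.sub_lt r.pos Nat.one_pos⟩

/-- A square matrix `g` (upper triangular, with positive diagonal and bottom-right entry `1`)
is *essentially hyperbolic* if `g ≠ 1` and there is a row index `r` which is not the last row
such that `(g-1)_{r,N} ≠ 0` (where `N` is the last column) and every nonzero entry of `g - 1`
lies either in a row strictly above `r`, or at position `(r, N)`. -/
def EssentiallyHyperbolic {N : ℕ} {R : Type*} [CommRing R]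
    (g : Matrix (Fin N) (Fin N) R) : Prop :=
  g ≠ 1 ∧ ∃ r : Fin N, (r : ℕ) + 1 < N ∧ (g - 1) r (lastOf r) ≠ 0 ∧
    ∀ i j : Fin N, (g - 1) i j ≠ 0 → i < r ∨ (i = r ∧ j = lastOf r)

end Matrices

instance AddAut.group (A : Type*) [Add A] : Group (AddAut A) where
  mul g h := AddEquiv.trans h g
  one := AddEquiv.refl _
  inv := AddEquiv.symm
  mul_assoc _ _ _ := rfl
  one_mul _ := rfl
  mul_one _ := rfl
  inv_mul_cancel := AddEquiv.self_trans_symm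

/-- The group of order-preserving additive automorphisms of a linearly ordered abelian
group `Λ`, as a subgroup of `AddAut Λ`. -/
def orderAddAut (Λ : Type*) [AddCommGroup Λ] [LinearOrder Λ] [IsOrderedAddMonoid Λ] : Subgroup (AddAut Λ) where
  carrier := {f | StrictMono f}
  one_mem' := strictMono_id
  mul_mem' := by
    intro f g hf hg a b hab
    exact hf (hg hab)
  inv_mem' := by
    intro f hf a b hab
    exact hf.lt_iff_lt.1 (show f (f.symm a) < f (f.symm b) by simpa using hab)


section Order
variable {n : ℕ}

theorem lexlt_iff {x y : Lex (Fin n → ℤ)} :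
    x < y ↔ ∃ i, (∀ j, j < i → ofLex x j = ofLex y j) ∧ ofLex x i < ofLex y i := Iff.rfl

theorem lexpow_lt_iff' {x y : LexPow ℤ n} :
    x < y ↔ LexPow.toRevLex x < LexPow.toRevLex y := Iff.rfl

theorem LexPow.lt_iff {x y : LexPow ℤ n} :
    x < y ↔ ∃ k, x k < y k ∧ ∀ j, k < j → x j = y j := by
  rw [lexpow_lt_iff', lexlt_iff]
  constructor
  · rintro ⟨i, hji, hi⟩
    refine ⟨Fin.rev i, hi, fun j hj => ?_⟩
    have := hji (Fin.rev j) (by rw [← Fin.rev_rev i, Fin.rev_lt_rev]; exact hj)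
    simp [LexPow.toRevLex, LexPow.of, Fin.rev_rev] at this
    exact this
  · rintro ⟨k, hk, hjk⟩
    refine ⟨Fin.rev k, fun j hj => ?_, by simp [LexPow.toRevLex, LexPow.of, Fin.rev_rev]; exact hk⟩
    show x (Fin.rev j) = y (Fin.rev j)
    refine hjk (Fin.rev j) ?_
    rw [← Fin.rev_rev k, Fin.rev_lt_rev]
    exact hj

end Order

namespace LexProof
variable {n : ℕ}

theorem lexpow_ext_iff {x y : LexPow ℤ n} : x = y ↔ ∀ i, x i = y i :=
  ⟨fun h i => by rw [h], fun h => funext h⟩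

theorem zero_apply (i : Fin n) : (0 : LexPow ℤ n) i = 0 := rfl
theorem add_apply (x y : LexPow ℤ n) (i : Fin n) : (x + y) i = x i + y i := rfl
theorem neg_apply (x : LexPow ℤ n) (i : Fin n) : (-x) i = -(x i) := rfl
theorem sub_apply (x y : LexPow ℤ n) (i : Fin n) : (x - y) i = x i - y i := rfl
theorem nsmul_apply (m : ℕ) (x : LexPow ℤ n) (i : Fin n) : (m • x) i = m • x i := rfl

theorem pos_iff {x : LexPow ℤ n} :
    0 < x ↔ ∃ k, 0 < x k ∧ ∀ j, k < j → x j = 0 := by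
  rw [LexPow.lt_iff]
  refine exists_congr fun k => ?_
  simp only [zero_apply]
  exact ⟨fun ⟨h1, h2⟩ => ⟨h1, fun j hj => (h2 j hj).symm⟩,
    fun ⟨h1, h2⟩ => ⟨h1, fun j hj => (h2 j hj).symm⟩⟩

open Classical in
noncomputable def supp (x : LexPow ℤ n) : Finset (Fin n) := Finset.univ.filter (fun i => x i ≠ 0)

theorem mem_supp {x : LexPow ℤ n} {i : Fin n} : i ∈ supp x ↔ x i ≠ 0 := by
  simp [supp]

theorem supp_nonempty {x : LexPow ℤ n} (hx : x ≠ 0) : (supp x).Nonempty := by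
  by_contra h
  rw [Finset.not_nonempty_iff_eq_empty] at h
  refine hx (funext fun i => ?_)
  by_contra hi
  have : i ∈ supp x := mem_supp.2 hi
  simp [h] at this

noncomputable def topIdx (x : LexPow ℤ n) (hx : x ≠ 0) : Fin n :=
  (supp x).max' (supp_nonempty hx)

theorem topIdx_ne {x : LexPow ℤ n} (hx : x ≠ 0) : x (topIdx x hx) ≠ 0 :=
  mem_supp.1 ((supp x).max'_mem (supp_nonempty hx))

theorem eq_zero_of_topIdx_lt {x : LexPow ℤ n} (hx : x ≠ 0) {j : Fin n}
    (hj : topIdx x hx < j) : x j = 0 := by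
  by_contra h
  exact absurd (Finset.le_max' _ j (mem_supp.2 h)) (not_le.2 hj)

theorem topIdx_eq {x : LexPow ℤ n} (hx : x ≠ 0) {k : Fin n} (hk : x k ≠ 0)
    (h : ∀ j, k < j → x j = 0) : topIdx x hx = k := by
  refine le_antisymm ?_ (Finset.le_max' _ k (mem_supp.2 hk))
  by_contra hlt
  exact topIdx_ne hx (h _ (not_le.1 hlt))

theorem pos_iff_topIdx {x : LexPow ℤ n} (hx : x ≠ 0) :
    0 < x ↔ 0 < x (topIdx x hx) := by
  rw [pos_iff]
  constructor
  · rintro ⟨k, hk1, hk2⟩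
    rwa [topIdx_eq hx (ne_of_gt hk1) hk2]
  · intro h
    exact ⟨_, h, fun j hj => eq_zero_of_topIdx_lt hx hj⟩

theorem abs_ne_zero {x : LexPow ℤ n} (hx : x ≠ 0) : |x| ≠ 0 := by
  rcases abs_choice x with h | h <;> rw [h]
  · exact hx
  · simpa using hx

theorem topIdx_abs {x : LexPow ℤ n} (hx : x ≠ 0) : topIdx |x| (abs_ne_zero hx) = topIdx x hx := by
  refine topIdx_eq (abs_ne_zero hx) ?_ ?_
  · have := topIdx_ne hx
    rcases abs_choice x with h | h <;> rw [h]
    · exact this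
    · rw [neg_apply]; simpa using this
  · intro j hj
    have hxj : x j = 0 := eq_zero_of_topIdx_lt hx hj
    rcases abs_choice x with h | h <;> rw [h]
    · exact hxj
    · rw [neg_apply, hxj, neg_zero]

theorem abs_topIdx_pos {x : LexPow ℤ n} (hx : x ≠ 0) : 0 < |x| (topIdx x hx) := by
  have h1 : 0 < |x| := abs_pos.2 hx
  rw [pos_iff_topIdx (abs_ne_zero hx), topIdx_abs hx] at h1
  exact h1

theorem topIdx_le_iff {x y : LexPow ℤ n} (hx : x ≠ 0) (hy : y ≠ 0) :
    topIdx x hx ≤ topIdx y hy ↔ ∃ m : ℕ, |x| ≤ m • |y| := by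
  constructor
  · intro hle
    set t := topIdx y hy with ht
    refine ⟨(x t).natAbs + 1, le_of_lt ?_⟩
    rw [LexPow.lt_iff]
    refine ⟨t, ?_, fun j hj => ?_⟩
    · have hyt : 1 ≤ |y| t := abs_topIdx_pos hy
      have hxt : |x| t ≤ ((x t).natAbs : ℤ) := by
        rcases abs_choice x with h | h <;> rw [h]
        · omega
        · rw [neg_apply]; omega
      have key : |x| t < (((x t).natAbs + 1 : ℕ) : ℤ) * (|y| t) := by
        have h1 : (((x t).natAbs + 1 : ℕ) : ℤ) * 1 ≤ (((x t).natAbs + 1 : ℕ) : ℤ) * (|y| t) := by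
          refine mul_le_mul_of_nonneg_left hyt (by positivity)
        have h2 : |x| t < (((x t).natAbs + 1 : ℕ) : ℤ) * 1 := by rw [mul_one]; omega
        exact lt_of_lt_of_le h2 h1
      rw [nsmul_apply, nsmul_eq_mul]
      exact key
    · have hxj : x j = 0 := eq_zero_of_topIdx_lt hx (lt_of_le_of_lt hle hj)
      have hyj : y j = 0 := eq_zero_of_topIdx_lt hy hj
      have h1 : |x| j = 0 := by
        rcases abs_choice x with h | h <;> rw [h] <;> simp [neg_apply, hxj]
      have h2 : |y| j = 0 := by
        rcases abs_choice y with h | h <;> rw [h] <;> simp [neg_apply, hyj]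
      rw [h1, nsmul_apply, h2, smul_zero]
  · rintro ⟨m, hm⟩
    by_contra hlt
    rw [not_le] at hlt
    set s := topIdx x hx with hs
    have : m • |y| < |x| := by
      rw [LexPow.lt_iff]
      refine ⟨s, ?_, fun j hj => ?_⟩
      · have : y s = 0 := eq_zero_of_topIdx_lt hy hlt
        have h2 : |y| s = 0 := by
          rcases abs_choice y with h | h <;> rw [h] <;> simp [neg_apply, this]
        rw [nsmul_apply, h2, smul_zero]
        exact abs_topIdx_pos hx
      · have hxj : x j = 0 := eq_zero_of_topIdx_lt hx hj
        have hyj : y j = 0 := eq_zero_of_topIdx_lt hy (lt_trans hlt hj)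
        have h1 : |x| j = 0 := by
          rcases abs_choice x with h | h <;> rw [h] <;> simp [neg_apply, hxj]
        have h2 : |y| j = 0 := by
          rcases abs_choice y with h | h <;> rw [h] <;> simp [neg_apply, hyj]
        rw [h1, nsmul_apply, h2, smul_zero]
    exact absurd hm (not_le.2 this)

end LexProof

namespace LexProof
open Matrix
variable {n : ℕ}

theorem zsmul_apply (m : ℤ) (x : LexPow ℤ n) (i : Fin n) : (m • x) i = m • x i := rfl

theorem symm_strictMono {α : LexPow ℤ n ≃+ LexPow ℤ n} (hα : StrictMono α) :
    StrictMono α.symm := fun a b hab =>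
  hα.lt_iff_lt.1 (by simpa only [AddEquiv.apply_symm_apply] using hab)

theorem map_ne_zero {α : LexPow ℤ n ≃+ LexPow ℤ n} {x : LexPow ℤ n} (hx : x ≠ 0) :
    α x ≠ 0 := fun h => hx (by simpa using congrArg α.symm h)

theorem map_abs {α : LexPow ℤ n ≃+ LexPow ℤ n} (hα : StrictMono α) (x : LexPow ℤ n) :
    α |x| = |α x| := by
  rw [abs_eq_max_neg, abs_eq_max_neg, hα.monotone.map_max, map_neg]

theorem topIdx_map_le_iff {α : LexPow ℤ n ≃+ LexPow ℤ n} (hα : StrictMono α)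
    {x y : LexPow ℤ n} (hx : x ≠ 0) (hy : y ≠ 0) :
    topIdx (α x) (map_ne_zero hx) ≤ topIdx (α y) (map_ne_zero hy) ↔
      topIdx x hx ≤ topIdx y hy := by
  rw [topIdx_le_iff, topIdx_le_iff]
  refine exists_congr fun m => ?_
  rw [← map_abs hα, ← map_abs hα, ← map_nsmul, hα.le_iff_le]

/-- standard basis vector -/
def ee (k : Fin n) : LexPow ℤ n := LexPow.of (Pi.single k 1)

theorem ee_apply (k i : Fin n) : ee k i = if i = k then 1 else 0 := Pi.single_apply k 1 i

theorem ee_ne (k : Fin n) : ee k ≠ 0 := fun h => by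
  have : ee k k = (0 : LexPow ℤ n) k := congrFun h k
  rw [ee_apply, zero_apply] at this
  simp at this

theorem ee_pos (k : Fin n) : 0 < ee k := by
  rw [pos_iff]
  refine ⟨k, by simp [ee_apply], fun j hj => by simp [ee_apply, ne_of_gt hj]⟩

theorem topIdx_ee (k : Fin n) : topIdx (ee k) (ee_ne k) = k :=
  topIdx_eq _ (by simp [ee_apply]) (fun j hj => by simp [ee_apply, ne_of_gt hj])

theorem topIdx_map_ee {α : LexPow ℤ n ≃+ LexPow ℤ n} (hα : StrictMono α) (k : Fin n) :
    topIdx (α (ee k)) (map_ne_zero (ee_ne k)) = k := by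
  set σ : Fin n → Fin n := fun k => topIdx (α (ee k)) (map_ne_zero (ee_ne k)) with hσdef
  have hiff : ∀ k l : Fin n, σ k ≤ σ l ↔ k ≤ l := fun k l => by
    rw [hσdef]
    simp only
    rw [topIdx_map_le_iff hα (ee_ne k) (ee_ne l), topIdx_ee, topIdx_ee]
  have hmono : StrictMono σ := fun k l h =>
    lt_of_le_not_ge ((hiff k l).2 h.le) (fun hc => absurd ((hiff l k).1 hc) (not_le.2 h))
  have hsurj : Function.Surjective σ :=
    Finite.injective_iff_surjective.1 hmono.injective
  have : StrictMono.orderIsoOfSurjective σ hmono hsurj = OrderIso.refl (Fin n) :=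
    Subsingleton.elim _ _
  have h2 : σ k = (StrictMono.orderIsoOfSurjective σ hmono hsurj) k := rfl
  rw [this] at h2
  exact h2

/-- the matrix of an additive automorphism -/
def matOf (α : LexPow ℤ n ≃+ LexPow ℤ n) : Matrix (Fin n) (Fin n) ℤ :=
  Matrix.of fun i j => α (ee j) i

theorem matOf_apply (α : LexPow ℤ n ≃+ LexPow ℤ n) (i j : Fin n) :
    matOf α i j = α (ee j) i := rfl

theorem eq_sum_ee (x : LexPow ℤ n) : x = ∑ j, x j • ee j := by
  funext i
  erw [Finset.sum_apply]
  have : ∀ j, (x j • ee j) i = x j * (if i = j then 1 else 0) := fun j => by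
    rw [zsmul_apply, ee_apply, smul_eq_mul]
  simp only [this]
  simp [Finset.sum_ite_eq]
  rw [Finset.sum_ite_eq Finset.univ i (x : Fin n → ℤ), if_pos (Finset.mem_univ i)]

theorem matOf_mulVec (α : LexPow ℤ n ≃+ LexPow ℤ n) (x : LexPow ℤ n) (i : Fin n) :
    (matOf α *ᵥ (x : Fin n → ℤ)) i = α x i := by
  conv_rhs => rw [eq_sum_ee x, map_sum]
  erw [Finset.sum_apply, Matrix.mulVec, dotProduct]
  refine Finset.sum_congr rfl fun j _ => ?_
  rw [map_zsmul, zsmul_apply, matOf_apply, smul_eq_mul, mul_comm]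

theorem matOf_eq_of {α : LexPow ℤ n ≃+ LexPow ℤ n} (M : Matrix (Fin n) (Fin n) ℤ)
    (h : ∀ x i, (M *ᵥ (x : Fin n → ℤ)) i = α x i) : M = matOf α := by
  ext i j
  have h1 : (M *ᵥ Pi.single j 1) i = α (ee j) i := h (ee j) i
  have h2 : (matOf α *ᵥ Pi.single j 1) i = α (ee j) i := matOf_mulVec α (ee j) i
  rw [Matrix.mulVec_single_one] at h1 h2
  simp only [Matrix.col_apply] at h1 h2
  rw [h1, h2]

theorem matOf_mul (α β : LexPow ℤ n ≃+ LexPow ℤ n) :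
    matOf β * matOf α = matOf (α.trans β) := by
  refine matOf_eq_of _ fun x i => ?_
  rw [← Matrix.mulVec_mulVec]
  have h1 : (matOf α *ᵥ (x : Fin n → ℤ)) = ((α x : LexPow ℤ n) : Fin n → ℤ) :=
    funext fun i => matOf_mulVec α x i
  rw [h1, matOf_mulVec β (α x) i]
  rfl

theorem matOf_id : matOf (AddEquiv.refl (LexPow ℤ n)) = 1 := by
  ext i j
  rw [matOf_apply, AddEquiv.refl_apply, ee_apply, Matrix.one_apply]

theorem matOf_tri {α : LexPow ℤ n ≃+ LexPow ℤ n} (hα : StrictMono α) {i j : Fin n}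
    (h : j < i) : matOf α i j = 0 := by
  rw [matOf_apply]
  refine eq_zero_of_topIdx_lt (map_ne_zero (ee_ne j)) ?_
  rwa [topIdx_map_ee hα]

theorem matOf_diag_pos {α : LexPow ℤ n ≃+ LexPow ℤ n} (hα : StrictMono α) (i : Fin n) :
    0 < matOf α i i := by
  have hpos : 0 < α (ee i) := by
    have := hα (ee_pos i)
    rwa [map_zero] at this
  rw [pos_iff_topIdx (map_ne_zero (ee_ne i))] at hpos
  rwa [topIdx_map_ee hα] at hpos

theorem matOf_diag_one {α : LexPow ℤ n ≃+ LexPow ℤ n} (hα : StrictMono α) (i : Fin n) :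
    matOf α i i = 1 := by
  have hmul : matOf α * matOf α.symm = 1 := by
    rw [matOf_mul]
    have : (α.symm.trans α) = AddEquiv.refl (LexPow ℤ n) := by
      ext x; simp
    rw [this, matOf_id]
  have hdiag : matOf α i i * matOf α.symm i i = 1 := by
    have h1 := congrFun (congrFun hmul i) i
    rw [Matrix.one_apply_eq] at h1
    rw [← h1]
    exact (diag_mul_of_triangular (fun a b hab => matOf_tri hα hab)
      (fun a b hab => matOf_tri (symm_strictMono hα) hab) i).symm
  rcases Int.mul_eq_one_iff_eq_one_or_neg_one.1 hdiag with ⟨h, _⟩ | ⟨h, _⟩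
  · exact h
  · exact absurd (matOf_diag_pos hα i) (by rw [h]; norm_num)

end LexProof

namespace LexProof
open Matrix
variable {n : ℕ}

/-- Conditions of membership in `UT`. -/
def Props (M : Matrix (Fin (n+1)) (Fin (n+1)) ℤ) : Prop :=
  (∀ i j, j < i → M i j = 0) ∧ ∀ i, M i i = 1

def aff (M : Matrix (Fin (n+1)) (Fin (n+1)) ℤ) (x : LexPow ℤ n) : LexPow ℤ n :=
  fun i => (M *ᵥ Fin.snoc x 1) i.castSucc

def lin (M : Matrix (Fin (n+1)) (Fin (n+1)) ℤ) (x : LexPow ℤ n) : LexPow ℤ n :=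
  fun i => (M *ᵥ Fin.snoc x 0) i.castSucc

theorem snoc_last_lp (x : LexPow ℤ n) (c : ℤ) : Fin.snoc (α := fun _ => ℤ) x c (Fin.last n) = c :=
  Fin.snoc_last (α := fun _ => ℤ) (p := x) c

theorem snoc_cs_lp (x : LexPow ℤ n) (c : ℤ) (i : Fin n) : Fin.snoc (α := fun _ => ℤ) x c i.castSucc = x i :=
  Fin.snoc_castSucc (α := fun _ => ℤ) (p := x) c i

theorem mulVec_snoc {M : Matrix (Fin (n+1)) (Fin (n+1)) ℤ} (hM : Props M)
    (x : LexPow ℤ n) (c : ℤ) :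
    M *ᵥ Fin.snoc x c = Fin.snoc (fun i => (M *ᵥ Fin.snoc x c) i.castSucc) c := by
  funext j
  refine Fin.lastCases ?_ (fun j' => ?_) j
  · rw [Fin.snoc_last]
    rw [Matrix.mulVec, dotProduct, Fin.sum_univ_castSucc]
    have h0 : ∀ k : Fin n, M (Fin.last n) k.castSucc = 0 :=
      fun k => hM.1 _ _ (Fin.castSucc_lt_last k)
    simp [h0, hM.2, Fin.snoc_last, snoc_last_lp]
  · rw [Fin.snoc_castSucc]

theorem aff_mul {M N : Matrix (Fin (n+1)) (Fin (n+1)) ℤ} (hN : Props N) (x : LexPow ℤ n) :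
    aff (M * N) x = aff M (aff N x) := by
  funext i
  show ((M * N) *ᵥ Fin.snoc x 1) i.castSucc = (M *ᵥ Fin.snoc (aff N x) 1) i.castSucc
  rw [← Matrix.mulVec_mulVec, mulVec_snoc hN x 1]
  rfl

theorem lin_mul {M N : Matrix (Fin (n+1)) (Fin (n+1)) ℤ} (hN : Props N) (x : LexPow ℤ n) :
    lin (M * N) x = lin M (lin N x) := by
  funext i
  show ((M * N) *ᵥ Fin.snoc x 0) i.castSucc = (M *ᵥ Fin.snoc (lin N x) 0) i.castSucc
  rw [← Matrix.mulVec_mulVec, mulVec_snoc hN x 0]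
  rfl

theorem aff_one (x : LexPow ℤ n) : aff 1 x = x := by
  funext i
  show ((1 : Matrix _ _ ℤ) *ᵥ Fin.snoc x 1) i.castSucc = x i
  rw [Matrix.one_mulVec, snoc_cs_lp]

theorem lin_one (x : LexPow ℤ n) : lin 1 x = x := by
  funext i
  show ((1 : Matrix _ _ ℤ) *ᵥ Fin.snoc x 0) i.castSucc = x i
  rw [Matrix.one_mulVec, snoc_cs_lp]

theorem snoc_sub (x y : LexPow ℤ n) (c d : ℤ) :
    (Fin.snoc x c - Fin.snoc y d : Fin (n+1) → ℤ) = Fin.snoc (x - y) (c - d) := by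
  funext j
  refine Fin.lastCases ?_ (fun j' => ?_) j
  · simp [Fin.snoc_last, snoc_last_lp]
  · simp only [Pi.sub_apply, Fin.snoc_castSucc, snoc_cs_lp]
    rfl

theorem snoc_add (x y : LexPow ℤ n) (c d : ℤ) :
    (Fin.snoc x c + Fin.snoc y d : Fin (n+1) → ℤ) = Fin.snoc (x + y) (c + d) := by
  funext j
  refine Fin.lastCases ?_ (fun j' => ?_) j
  · simp [Fin.snoc_last, snoc_last_lp]
  · simp only [Pi.add_apply, Fin.snoc_castSucc, snoc_cs_lp]
    rfl

theorem aff_sub (M : Matrix (Fin (n+1)) (Fin (n+1)) ℤ) (x y : LexPow ℤ n) :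
    aff M x - aff M y = lin M (x - y) := by
  funext i
  rw [sub_apply]
  show (M *ᵥ Fin.snoc x 1) i.castSucc - (M *ᵥ Fin.snoc y 1) i.castSucc
      = (M *ᵥ Fin.snoc (x - y) 0) i.castSucc
  rw [← Pi.sub_apply (M *ᵥ Fin.snoc x 1), ← Matrix.mulVec_sub, snoc_sub, sub_self]

theorem lin_add (M : Matrix (Fin (n+1)) (Fin (n+1)) ℤ) (x y : LexPow ℤ n) :
    lin M (x + y) = lin M x + lin M y := by
  funext i
  rw [add_apply]
  show (M *ᵥ Fin.snoc (x + y) 0) i.castSucc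
      = (M *ᵥ Fin.snoc x 0) i.castSucc + (M *ᵥ Fin.snoc y 0) i.castSucc
  rw [← Pi.add_apply (M *ᵥ Fin.snoc x 0), ← Matrix.mulVec_add, snoc_add, add_zero]

theorem lin_apply (M : Matrix (Fin (n+1)) (Fin (n+1)) ℤ) (x : LexPow ℤ n) (i : Fin n) :
    lin M x i = ∑ j : Fin n, M i.castSucc j.castSucc * x j := by
  show (M *ᵥ Fin.snoc x 0) i.castSucc = _
  rw [Matrix.mulVec, dotProduct, Fin.sum_univ_castSucc]
  simp only [Fin.snoc_castSucc, Fin.snoc_last, snoc_cs_lp, snoc_last_lp, mul_zero, add_zero]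

theorem lin_pos {M : Matrix (Fin (n+1)) (Fin (n+1)) ℤ} (hM : Props M)
    {x : LexPow ℤ n} (hx : 0 < x) : 0 < lin M x := by
  rw [pos_iff] at hx ⊢
  obtain ⟨k, hk, hk2⟩ := hx
  refine ⟨k, ?_, fun j hj => ?_⟩
  · rw [lin_apply]
    rw [Finset.sum_eq_single k]
    · rw [hM.2, one_mul]; exact hk
    · intro m _ hm
      rcases lt_or_gt_of_ne hm with h | h
      · rw [hM.1 _ _ (Fin.castSucc_lt_castSucc_iff.2 h), zero_mul]
      · rw [hk2 _ h, mul_zero]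
    · intro h; exact absurd (Finset.mem_univ k) h
  · rw [lin_apply]
    refine Finset.sum_eq_zero fun m _ => ?_
    rcases lt_or_ge m j with h | h
    · rw [hM.1 _ _ (Fin.castSucc_lt_castSucc_iff.2 h), zero_mul]
    · rw [hk2 _ (lt_of_lt_of_le hj h), mul_zero]

theorem lin_sub (M : Matrix (Fin (n+1)) (Fin (n+1)) ℤ) (x y : LexPow ℤ n) :
    lin M (x - y) = lin M x - lin M y := by
  have h := lin_add M (x - y) y
  rw [sub_add_cancel] at h
  rw [h]; abel

theorem lin_strictMono {M : Matrix (Fin (n+1)) (Fin (n+1)) ℤ} (hM : Props M) :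
    StrictMono (lin M) := fun a b hab => by
  have h1 : 0 < lin M (b - a) := lin_pos hM (sub_pos.2 hab)
  rw [lin_sub] at h1
  exact sub_pos.1 h1

theorem aff_strictMono {M : Matrix (Fin (n+1)) (Fin (n+1)) ℤ} (hM : Props M) :
    StrictMono (aff M) := fun a b hab => by
  have h1 : 0 < lin M (b - a) := lin_pos hM (sub_pos.2 hab)
  rw [← aff_sub] at h1
  exact sub_pos.1 h1

end LexProof

namespace LexProof
open Matrix
variable {n : ℕ}

def blk (A : Matrix (Fin n) (Fin n) ℤ) (b : Fin n → ℤ) :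
    Matrix (Fin (n+1)) (Fin (n+1)) ℤ :=
  Matrix.of fun i j =>
    Fin.lastCases (Fin.lastCases 1 (fun _ => 0) j)
      (fun i' => Fin.lastCases (b i') (fun j' => A i' j') j) i

@[simp] theorem blk_cs_cs (A : Matrix (Fin n) (Fin n) ℤ) (b : Fin n → ℤ) (i j : Fin n) :
    blk A b i.castSucc j.castSucc = A i j := by
  simp [blk]

@[simp] theorem blk_cs_last (A : Matrix (Fin n) (Fin n) ℤ) (b : Fin n → ℤ) (i : Fin n) :
    blk A b i.castSucc (Fin.last n) = b i := by
  simp [blk]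

@[simp] theorem blk_last_cs (A : Matrix (Fin n) (Fin n) ℤ) (b : Fin n → ℤ) (j : Fin n) :
    blk A b (Fin.last n) j.castSucc = 0 := by
  simp [blk]

@[simp] theorem blk_last_last (A : Matrix (Fin n) (Fin n) ℤ) (b : Fin n → ℤ) :
    blk A b (Fin.last n) (Fin.last n) = 1 := by
  simp [blk]

theorem blk_mul (A A2 : Matrix (Fin n) (Fin n) ℤ) (b b2 : Fin n → ℤ) :
    blk A b * blk A2 b2 = blk (A * A2) (A *ᵥ b2 + b) := by
  ext i j
  rw [Matrix.mul_apply, Fin.sum_univ_castSucc]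
  refine Fin.lastCases ?_ (fun i' => ?_) i <;> refine Fin.lastCases ?_ (fun j' => ?_) j
  · simp
  · simp
  · simp [Matrix.mulVec, dotProduct]
  · simp [Matrix.mul_apply]
end LexProof

namespace LexProof
open Matrix
variable {n : ℕ}

theorem blk_one : blk (1 : Matrix (Fin n) (Fin n) ℤ) 0 = 1 := by
  ext i j
  refine Fin.lastCases ?_ (fun i' => ?_) i <;> refine Fin.lastCases ?_ (fun j' => ?_) j
  · simp
  · simp [Matrix.one_apply, (Fin.castSucc_lt_last j').ne']
  · simp [Matrix.one_apply, (Fin.castSucc_lt_last i').ne]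
  · simp [Matrix.one_apply, Fin.castSucc_inj]

theorem blk_props {A : Matrix (Fin n) (Fin n) ℤ} {b : Fin n → ℤ}
    (htri : ∀ i j, j < i → A i j = 0) (hdiag : ∀ i, A i i = 1) : Props (blk A b) := by
  constructor
  · intro i j hij
    refine Fin.lastCases ?_ (fun i' => ?_) i hij <;> intro hij
    · refine Fin.lastCases ?_ (fun j' => ?_) j hij <;> intro hij
      · exact absurd hij (lt_irrefl _)
      · simp
    · refine Fin.lastCases ?_ (fun j' => ?_) j hij <;> intro hij
      · exact absurd hij (not_lt.2 (Fin.castSucc_lt_last i').le)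
      · rw [blk_cs_cs]
        exact htri _ _ (Fin.castSucc_lt_castSucc_iff.1 hij)
  · intro i
    refine Fin.lastCases ?_ (fun i' => ?_) i
    · simp
    · rw [blk_cs_cs]; exact hdiag i'

end LexProof

namespace LexProof
open Matrix
variable {n : ℕ}

theorem matOf_mul_symm (α : LexPow ℤ n ≃+ LexPow ℤ n) : matOf α * matOf α.symm = 1 := by
  rw [matOf_mul]
  have : (α.symm.trans α) = AddEquiv.refl (LexPow ℤ n) := by ext x; simp
  rw [this, matOf_id]

theorem matOf_symm_mul (α : LexPow ℤ n ≃+ LexPow ℤ n) : matOf α.symm * matOf α = 1 := by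
  rw [matOf_mul]
  have : (α.trans α.symm) = AddEquiv.refl (LexPow ℤ n) := by ext x; simp
  rw [this, matOf_id]

abbrev mat (M : UT (n+1) ℤ) : Matrix (Fin (n+1)) (Fin (n+1)) ℤ :=
  ((M : (Matrix (Fin (n+1)) (Fin (n+1)) ℤ)ˣ) : Matrix (Fin (n+1)) (Fin (n+1)) ℤ)

theorem propsM (M : UT (n+1) ℤ) : Props (mat M) := ⟨M.2.1, M.2.2⟩

theorem mat_mul (M N : UT (n+1) ℤ) : mat (M * N) = mat M * mat N := rfl

theorem mat_inv_mul (M : UT (n+1) ℤ) : mat M⁻¹ * mat M = 1 := by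
  rw [← Units.val_mul, ← Subgroup.coe_mul, inv_mul_cancel M]
  rfl

theorem mat_mul_inv (M : UT (n+1) ℤ) : mat M * mat M⁻¹ = 1 := by
  rw [← Units.val_mul, ← Subgroup.coe_mul, mul_inv_cancel M]
  rfl

def PhiFun (M : UT (n+1) ℤ) : OPAffineAut (LexPow ℤ n) where
  toEquiv :=
    { toFun := aff (mat M)
      invFun := aff (mat M⁻¹)
      left_inv := fun x => by
        rw [← aff_mul (propsM M) x, mat_inv_mul, aff_one]
      right_inv := fun x => by
        rw [← aff_mul (propsM M⁻¹) x, mat_mul_inv, aff_one] }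
  strictMono' := aff_strictMono (propsM M)
  dilation :=
    { toFun := lin (mat M)
      invFun := lin (mat M⁻¹)
      left_inv := fun x => by
        rw [← lin_mul (propsM M) x, mat_inv_mul, lin_one]
      right_inv := fun x => by
        rw [← lin_mul (propsM M⁻¹) x, mat_mul_inv, lin_one]
      map_add' := lin_add (mat M) }
  dilation_strictMono := lin_strictMono (propsM M)
  affine := fun x y => aff_sub (mat M) x y

noncomputable def Phi : UT (n+1) ℤ →* OPAffineAut (LexPow ℤ n) :=
  MonoidHom.mk' PhiFun fun M N => OPAffineAut.ext' fun x => by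
    show aff (mat (M * N)) x = aff (mat M) (aff (mat N) x)
    rw [mat_mul]
    exact aff_mul (propsM N) x

theorem snoc_single (j : Fin n) :
    (Fin.snoc (Pi.single j (1:ℤ)) 0 : Fin (n+1) → ℤ) = Pi.single j.castSucc 1 := by
  funext i
  refine Fin.lastCases ?_ (fun i' => ?_) i
  · rw [Fin.snoc_last, Pi.single_eq_of_ne (Fin.castSucc_lt_last j).ne']
  · rw [Fin.snoc_castSucc, Pi.single_apply, Pi.single_apply]
    simp [Fin.castSucc_inj]

theorem snoc_zero_one :
    (Fin.snoc (0 : Fin n → ℤ) 1 : Fin (n+1) → ℤ) = Pi.single (Fin.last n) 1 := by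
  funext i
  refine Fin.lastCases ?_ (fun i' => ?_) i
  · rw [Fin.snoc_last, Pi.single_eq_same]
  · rw [Fin.snoc_castSucc, Pi.single_eq_of_ne (Fin.castSucc_lt_last i').ne]
    rfl

theorem Phi_inj : Function.Injective (Phi (n := n)) := by
  refine (injective_iff_map_eq_one Phi).2 fun M hM1 => ?_
  have hx : ∀ x : LexPow ℤ n, aff (mat M) x = x := fun x =>
    congrArg (fun f : OPAffineAut (LexPow ℤ n) => f.toEquiv x) hM1
  have hsnoc1 : ∀ x : LexPow ℤ n, mat M *ᵥ Fin.snoc x 1 = Fin.snoc x 1 := fun x => by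
    rw [mulVec_snoc (propsM M) x 1]
    exact congrArg (fun y : LexPow ℤ n => (Fin.snoc y 1 : Fin (n+1) → ℤ)) (hx x)
  have hsnoc0 : ∀ x : LexPow ℤ n, mat M *ᵥ Fin.snoc x 0 = Fin.snoc x 0 := fun x => by
    have h1 := hsnoc1 x
    have h0 := hsnoc1 0
    have hsub : mat M *ᵥ Fin.snoc x 1 - mat M *ᵥ Fin.snoc (0 : LexPow ℤ n) 1
        = Fin.snoc x 1 - Fin.snoc (0 : LexPow ℤ n) 1 := by rw [h1, h0]
    rw [← Matrix.mulVec_sub, snoc_sub, sub_self, sub_zero] at hsub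
    exact hsub
  have hcol : ∀ j : Fin (n+1), mat M *ᵥ Pi.single j 1 = Pi.single j 1 := fun j => by
    refine Fin.lastCases ?_ (fun j' => ?_) j
    · rw [← snoc_zero_one]; exact hsnoc1 0
    · rw [← snoc_single j']; exact hsnoc0 (ee j')
  have hmat : mat M = 1 := by
    ext i j
    have h := congrFun (hcol j) i
    simp only [Matrix.mulVec_single_one, Matrix.col_apply] at h
    rw [h, Matrix.one_apply, Pi.single_apply]
  exact Subtype.ext (Units.ext hmat)

theorem Phi_surj : Function.Surjective (Phi (n := n)) := fun f => by
  set α := f.dilation with hαdef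
  have hα : StrictMono α := f.dilation_strictMono
  have hα' : StrictMono α.symm := symm_strictMono hα
  set A := matOf α with hA
  set A' := matOf α.symm with hA'
  set b : Fin n → ℤ := f.toEquiv 0 with hb
  set b' : Fin n → ℤ := -(α.symm (f.toEquiv 0)) with hb'
  have h1 : blk A b * blk A' b' = 1 := by
    rw [blk_mul, matOf_mul_symm]
    have hv1 : A *ᵥ b' = α b' := funext fun i => matOf_mulVec α b' i
    have hab : α b' = -b := by
      rw [hb', map_neg, AddEquiv.apply_symm_apply, hb]
      rfl
    have hsum : A *ᵥ b' + b = 0 := by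
      rw [hv1, hab]
      exact neg_add_cancel _
    rw [hsum, blk_one]
  have h2 : blk A' b' * blk A b = 1 := by
    rw [blk_mul, matOf_symm_mul]
    have hv1 : A' *ᵥ b = α.symm b := funext fun i => matOf_mulVec α.symm b i
    have hsum : A' *ᵥ b + b' = 0 := by
      rw [hv1, hb', hb]
      exact add_neg_cancel _
    rw [hsum, blk_one]
  have hprops : Props (blk A b) :=
    blk_props (fun i j hij => matOf_tri hα hij) (matOf_diag_one hα)
  refine ⟨⟨⟨blk A b, blk A' b', h1, h2⟩, hprops.1, hprops.2⟩, ?_⟩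
  refine OPAffineAut.ext' fun x => ?_
  show aff (blk A b) x = f.toEquiv x
  have hfx : f.toEquiv x = α x + f.toEquiv 0 := by
    have h := f.affine x 0
    rw [sub_zero] at h
    rw [sub_eq_iff_eq_add] at h
    exact h
  funext i
  show (blk A b *ᵥ Fin.snoc x 1) i.castSucc = f.toEquiv x i
  rw [Matrix.mulVec, dotProduct, Fin.sum_univ_castSucc]
  simp only [Fin.snoc_castSucc, Fin.snoc_last, snoc_cs_lp, snoc_last_lp, blk_cs_cs, blk_cs_last, mul_one]
  rw [hfx, add_apply]
  congr 1
  exact matOf_mulVec α x i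

end LexProof

/-- The group of orientation-preserving affine automorphisms of `ℤ^n_lex`
is isomorphic to `UT(n+1, ℤ)`. -/
theorem opAffineAut_lexPow_int_mulEquiv_UT (n : ℕ) :
    Nonempty (OPAffineAut (LexPow ℤ n) ≃* UT (n + 1) ℤ) := by
  exact ⟨(MulEquiv.ofBijective (LexProof.Phi (n := n)) ⟨LexProof.Phi_inj, LexProof.Phi_surj⟩).symm⟩
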